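/- Along the iterates of the block-coordinate forward-backward algorithm, for every k it holds that φ_Γ(x^{k+1}) ≤ φ_Γ(x^k) − ∑_{i∈I^{k+1}} (ξ_i/(2γ_i))‖z_i^k − x_i^k‖², where ξ_i = (N − γ_i L_{f_i})/N > 0; in particular the FBE decreases surely at every iteration, regardless of which blocks are updated. -/

import Mathlib

open Filter Topology Metric Bornology Set
open scoped RealInnerProductSpace

noncomputable section

variable {N : ℕ} {E : Fin N → Type*}
  [∀ i, NormedAddCommGroup (E i)] [∀ i, InnerProductSpace ℝ (E i)]
  [∀ i, CompleteSpace (E i)]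

/-- `F(x) = (1/N) ∑ᵢ fᵢ(xᵢ)`, the smooth separable part of the cost. -/
def Fsum (f : ∀ i, E i → ℝ) (x : PiLp 2 E) : ℝ := (N : ℝ)⁻¹ * ∑ i, f i (x i)

/-- `Φ = F + G`, the total cost, extended-real-valued. -/
def Phi (f : ∀ i, E i → ℝ) (G : PiLp 2 E → EReal) (x : PiLp 2 E) : EReal :=
  ((Fsum f x : ℝ) : EReal) + G x

/-- The model `M(w,x) = F(x) + ⟨∇F(x),w-x⟩ + G(w) + ½‖w-x‖²_{Γ⁻¹}`, where `∇F(x)ᵢ = f'ᵢ(xᵢ)/N`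
and `Γ = blockdiag(γ₁ I, …, γ_N I)`. -/
def Mdl (f : ∀ i, E i → ℝ) (f' : ∀ i, E i → E i) (γ : Fin N → ℝ)
    (G : PiLp 2 E → EReal) (w x : PiLp 2 E) : EReal :=
  ((Fsum f x + (N : ℝ)⁻¹ * ∑ i, ⟪f' i (x i), w i - x i⟫
      + 2⁻¹ * ∑ i, (γ i)⁻¹ * ‖w i - x i‖ ^ 2 : ℝ) : EReal) + G w

/-- The forward-backward operator `T(x) = argmin_w M(w,x)`. -/
def Tmap (f : ∀ i, E i → ℝ) (f' : ∀ i, E i → E i) (γ : Fin N → ℝ)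
    (G : PiLp 2 E → EReal) (x : PiLp 2 E) : Set (PiLp 2 E) :=
  {z | ∀ w, Mdl f f' γ G z x ≤ Mdl f f' γ G w x}

/-- The `Γ⁻¹`-proximal mapping
`prox_G^{Γ⁻¹}(u) = argmin_w { G(w) + ½‖w-u‖²_{Γ⁻¹} }`. -/
def proxSet (γ : Fin N → ℝ) (G : PiLp 2 E → EReal) (u : PiLp 2 E) : Set (PiLp 2 E) :=
  {z | ∀ w, G z + ((2⁻¹ * ∑ i, (γ i)⁻¹ * ‖z i - u i‖ ^ 2 : ℝ) : EReal)
        ≤ G w + ((2⁻¹ * ∑ i, (γ i)⁻¹ * ‖w i - u i‖ ^ 2 : ℝ) : EReal)}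

/-- The forward (gradient) step `x - Γ∇F(x)`. -/
def fwd (f' : ∀ i, E i → E i) (γ : Fin N → ℝ) (x : PiLp 2 E) : PiLp 2 E :=
  WithLp.toLp 2 (fun i => x i - (γ i * (N : ℝ)⁻¹) • f' i (x i))

/-- Convexity for an extended-real-valued function. -/
def ERealConvex {X : Type*} [AddCommMonoid X] [Module ℝ X] (G : X → EReal) : Prop :=
  ∀ x y : X, ∀ a b : ℝ, 0 ≤ a → 0 ≤ b → a + b = 1 →
    G (a • x + b • y) ≤ (a : ℝ) * G x + (b : ℝ) * G y

/-- The regular (Fréchet) subdifferential `∂̂h(x)` of an extended-real-valued function. -/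
def frechetSubdiff {X : Type*} [NormedAddCommGroup X] [InnerProductSpace ℝ X]
    (h : X → EReal) (x : X) : Set X :=
  {v | h x ≠ ⊤ ∧ h x ≠ ⊥ ∧ ∀ ε : ℝ, 0 < ε →
      ∀ᶠ w in 𝓝 x, h x + ((⟪v, w - x⟫ - ε * ‖w - x‖ : ℝ) : EReal) ≤ h w}

/-- The limiting subdifferential `∂h(x)`. -/
def limitingSubdiff {X : Type*} [NormedAddCommGroup X] [InnerProductSpace ℝ X]
    (h : X → EReal) (x : X) : Set X :=
  {v | ∃ u w : ℕ → X, (∀ k, w k ∈ frechetSubdiff h (u k)) ∧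
      Tendsto u atTop (𝓝 x) ∧ Tendsto (fun k => h (u k)) atTop (𝓝 (h x)) ∧
      Tendsto w atTop (𝓝 v)}

/-- The Kurdyka-Łojasiewicz property with exponent `θ` (at every point of `dom ∂h`),
with desingularizing function `ψ(s) = ϱ s^{1-θ}`. -/
def HasKLExponent {X : Type*} [NormedAddCommGroup X] [InnerProductSpace ℝ X]
    (h : X → EReal) (θ : ℝ) : Prop :=
  ∀ xb : X, (limitingSubdiff h xb).Nonempty →
    ∃ ε η ϱ : ℝ, 0 < ε ∧ 0 < η ∧ 0 < ϱ ∧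
      ∀ w : X, ‖w - xb‖ < ε → h xb < h w → h w < h xb + ((η : ℝ) : EReal) →
        ∀ v ∈ limitingSubdiff h w,
          1 ≤ ϱ * (1 - θ) * (h w - h xb).toReal ^ (-θ) * ‖v‖

lemma descent_lemma {E' : Type*} [NormedAddCommGroup E'] [InnerProductSpace ℝ E'] [CompleteSpace E']
    (f : E' → ℝ) (f' : E' → E') (L : ℝ)
    (hf : ∀ u, HasGradientAt f (f' u) u)
    (hlip : ∀ u v, ‖f' u - f' v‖ ≤ L * ‖u - v‖) (u v : E') :
    f v ≤ f u + ⟪f' u, v - u⟫ + L / 2 * ‖v - u‖ ^ 2 := by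
  set d := v - u with hd
  set c := (⟪f' u, d⟫ : ℝ) with hc
  set s := ‖d‖ ^ 2 with hs
  set h : ℝ → ℝ := fun t => f (u + t • d) - t * c - t ^ 2 * (L / 2 * s) with hh
  have hline : ∀ t : ℝ, HasDerivAt (fun t : ℝ => u + t • d) d t := by
    intro t
    simpa using ((hasDerivAt_id t).smul_const d).const_add u
  have hderiv : ∀ t : ℝ, HasDerivAt h (⟪f' (u + t • d), d⟫ - c - t * (L * s)) t := by
    intro t
    have h1 : HasDerivAt (fun t : ℝ => f (u + t • d)) (⟪f' (u + t • d), d⟫) t := by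
      have := ((hasGradientAt_iff_hasFDerivAt.1 (hf (u + t • d))).comp_hasDerivAt t (hline t))
      simpa [Function.comp_def] using this
    have h2 : HasDerivAt (fun t : ℝ => t * c) c t := by
      simpa using (hasDerivAt_id t).mul_const c
    have h3 : HasDerivAt (fun t : ℝ => t ^ 2 * (L / 2 * s)) (t * (L * s)) t := by
      have := (hasDerivAt_pow 2 t).mul_const (L / 2 * s)
      exact this.congr_deriv (by norm_num; ring)
    exact (h1.sub h2).sub h3
  have hmono : AntitoneOn h (Icc (0:ℝ) 1) := by
    apply antitoneOn_of_deriv_nonpos (convex_Icc 0 1)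
    · exact fun t _ => (hderiv t).continuousAt.continuousWithinAt
    · exact fun t _ => (hderiv t).differentiableAt.differentiableWithinAt
    · intro t ht
      rw [interior_Icc] at ht
      rw [(hderiv t).deriv]
      have ht0 : (0:ℝ) ≤ t := le_of_lt ht.1
      have h1 : (⟪f' (u + t • d) - f' u, d⟫ : ℝ) ≤ ‖f' (u + t • d) - f' u‖ * ‖d‖ :=
        real_inner_le_norm _ _
      have h2 : ‖f' (u + t • d) - f' u‖ ≤ L * (t * ‖d‖) := by
        have := hlip (u + t • d) u
        simpa [norm_smul, abs_of_nonneg ht0] using this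
      have h3 : ‖f' (u + t • d) - f' u‖ * ‖d‖ ≤ L * (t * ‖d‖) * ‖d‖ :=
        mul_le_mul_of_nonneg_right h2 (norm_nonneg d)
      rw [inner_sub_left] at h1
      simp only [hs, hc]
      nlinarith [norm_nonneg d]
  have h10 : h 1 ≤ h 0 := hmono (by norm_num) (by norm_num) zero_le_one
  have e0 : h 0 = f u := by simp [hh]
  have e1 : h 1 = f v - c - L / 2 * s := by simp [hh, hd]
  rw [e0, e1] at h10
  simp only [hc, hs, hd] at h10 ⊢
  linarith

/-- Lemma 3.2(i), sure descent: along the iterates of the BC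
forward-backward algorithm, φ_Γ(x^{k+1}) ≤ φ_Γ(x^k) - ∑_{i∈I^{k+1}} (ξᵢ/(2γᵢ))‖zᵢ^k-xᵢ^k‖²,
where ξᵢ = (N - γᵢ L_{f_i})/N are strictly positive. -/
theorem bc_sure_descent_fbe
    (f : ∀ i, E i → ℝ) (f' : ∀ i, E i → E i) (L γ : Fin N → ℝ)
    (G : PiLp 2 E → EReal)
    (hf : ∀ i (u : E i), HasGradientAt (f i) (f' i u) u)
    (hL : ∀ i, 0 ≤ L i)
    (hlip : ∀ i (u v : E i), ‖f' i u - f' i v‖ ≤ L i * ‖u - v‖)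
    (hγ : ∀ i, 0 < γ i) (hγL : ∀ i, γ i * L i < (N : ℝ))
    (hGlsc : LowerSemicontinuous G)
    (hGproper : ∃ w, G w ≠ ⊤) (hGbot : ∀ w, G w ≠ ⊥)
    (hargmin : ∃ xs : PiLp 2 E, ∀ w, Phi f G xs ≤ Phi f G w)
    (φ : PiLp 2 E → ℝ)
    (hφ : ∀ x, ((φ x : ℝ) : EReal) = ⨅ w, Mdl f f' γ G w x)
    (x z : ℕ → PiLp 2 E) (I : ℕ → Finset (Fin N))
    (hz : ∀ k, z k ∈ Tmap f f' γ G (x k))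
    (hup : ∀ (k : ℕ) (i : Fin N), x (k + 1) i = if i ∈ I (k + 1) then z k i else x k i)
    :
    (∀ i, 0 < ((N : ℝ) - γ i * L i) / (N : ℝ)) ∧
    ∀ k : ℕ, φ (x (k + 1)) ≤ φ (x k)
        - ∑ i ∈ I (k + 1), (((N : ℝ) - γ i * L i) / (N : ℝ)) / (2 * γ i) * ‖z k i - x k i‖ ^ 2 := by

  have hxi : ∀ i : Fin N, 0 < ((N : ℝ) - γ i * L i) / (N : ℝ) := by
    intro i
    have hN : 0 < (N : ℝ) := by exact_mod_cast i.pos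
    exact div_pos (by linarith [hγL i]) hN
  refine ⟨hxi, fun k => ?_⟩
  set zz := z k with hzz
  set t : PiLp 2 E → Fin N → ℝ := fun w i =>
    (N : ℝ)⁻¹ * f i (w i) + (N : ℝ)⁻¹ * ⟪f' i (w i), zz i - w i⟫
      + 2⁻¹ * ((γ i)⁻¹ * ‖zz i - w i‖ ^ 2) with ht
  have hR : ∀ w : PiLp 2 E, Mdl f f' γ G zz w = ((∑ i, t w i : ℝ) : EReal) + G zz := by
    intro w
    have : Fsum f w + (N : ℝ)⁻¹ * ∑ i, ⟪f' i (w i), zz i - w i⟫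
        + 2⁻¹ * ∑ i, (γ i)⁻¹ * ‖zz i - w i‖ ^ 2 = ∑ i, t w i := by
      simp [Fsum, ht, Finset.mul_sum, Finset.sum_add_distrib]
    rw [Mdl, this]
  have hphik : ((φ (x k) : ℝ) : EReal) = Mdl f f' γ G zz (x k) := by
    rw [hφ]
    exact le_antisymm (iInf_le _ zz) (le_iInf (hz k))
  have hGt : G zz ≠ ⊤ := by
    intro hTop
    rw [hR (x k), hTop] at hphik
    simp at hphik
  set g := (G zz).toReal with hgdef
  have hg : G zz = ((g : ℝ) : EReal) := (EReal.coe_toReal hGt (hGbot zz)).symm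
  have hφ0 : φ (x k) = (∑ i, t (x k) i) + g := by
    have h0 := hphik
    rw [hR (x k), hg, ← EReal.coe_add] at h0
    exact_mod_cast h0
  have hφ1 : φ (x (k + 1)) ≤ (∑ i, t (x (k + 1)) i) + g := by
    have h1 : ((φ (x (k + 1)) : ℝ) : EReal) ≤ Mdl f f' γ G zz (x (k + 1)) := by
      rw [hφ]; exact iInf_le _ zz
    rw [hR (x (k + 1)), hg, ← EReal.coe_add] at h1
    exact_mod_cast h1
  have key : ∑ i ∈ I (k + 1), (((N : ℝ) - γ i * L i) / (N : ℝ)) / (2 * γ i) * ‖zz i - x k i‖ ^ 2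
      ≤ ∑ i, (t (x k) i - t (x (k + 1)) i) := by
    rw [← Finset.sum_subset (Finset.subset_univ (I (k + 1)))
      (fun i _ hi => by
        have hx : x (k + 1) i = x k i := by rw [hup k i, if_neg hi]
        simp [ht, hx])]
    apply Finset.sum_le_sum
    intro i hi
    have hN : 0 < (N : ℝ) := by exact_mod_cast i.pos
    have hx1 : x (k + 1) i = zz i := by rw [hup k i, if_pos hi]
    have hdesc := descent_lemma (f i) (f' i) (L i) (hf i) (hlip i) (x k i) (zz i)
    have hgam := hγ i
    have ht1 : t (x (k + 1)) i = (N : ℝ)⁻¹ * f i (zz i) := by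
      simp [ht, hx1]
    rw [ht1]
    simp only [ht]
    set a := f i (x k i)
    set b := f i (zz i)
    set p := (⟪f' i (x k i), zz i - x k i⟫ : ℝ)
    set q := ‖zz i - x k i‖ ^ 2 with hq
    have hq0 : 0 ≤ q := by positivity
    have hco : (((N : ℝ) - γ i * L i) / (N : ℝ)) / (2 * γ i)
        = 2⁻¹ * (γ i)⁻¹ - 2⁻¹ * L i * (N : ℝ)⁻¹ := by
      field_simp
    have hmul : (N : ℝ)⁻¹ * b ≤ (N : ℝ)⁻¹ * (a + p + L i / 2 * q) :=
      mul_le_mul_of_nonneg_left hdesc (by positivity)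
    have e : (N : ℝ)⁻¹ * (a + p + L i / 2 * q)
        = (N : ℝ)⁻¹ * a + (N : ℝ)⁻¹ * p + 2⁻¹ * L i * (N : ℝ)⁻¹ * q := by ring
    rw [hco]
    rw [e] at hmul
    nlinarith [hq0]
  have hsub : ∑ i, (t (x k) i - t (x (k + 1)) i)
      = ∑ i, t (x k) i - ∑ i, t (x (k + 1)) i := Finset.sum_sub_distrib _ _
  rw [hsub] at key
  linarith [hφ0, hφ1, key]
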